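/- Let X be a connected, locally path connected space. If {H_j : j ∈ J} is any collection of generalized covering subgroups of π₁(X,x₀), then H = ⋂_{j∈J} H_j is a generalized covering subgroup of π₁(X,x₀). -/

import Mathlib

open CategoryTheory unitInterval Topology

universe u v

noncomputable section

attribute [local instance] Path.Homotopic.setoid

namespace GCPaper

variable {X : Type u} [TopologicalSpace X]

/-- The homotopy class of a loop, as an element of the fundamental group. -/
def loopClass {x : X} (γ : Path x x) : FundamentalGroup X x :=
  FundamentalGroup.fromPath ⟦γ⟧

/-- The homomorphism on fundamental groups induced by a continuous map. -/
def π₁map {A B : Type u} [TopologicalSpace A] [TopologicalSpace B] (f : C(A, B)) (a : A) :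
    FundamentalGroup A a →* FundamentalGroup B (f a) :=
  Functor.mapEnd (FundamentalGroupoid.mk (a : TopCat.of A))
    ((FundamentalGroupoid.fundamentalGroupoidFunctor.map (TopCat.ofHom f) :
        Grpd.of (FundamentalGroupoid (TopCat.of A)) ⟶ Grpd.of (FundamentalGroupoid (TopCat.of B))) :
      FundamentalGroupoid (TopCat.of A) ⥤ FundamentalGroupoid (TopCat.of B))

/-- Transport of the fundamental group along an equality of basepoints. -/
def eqCast {x x' : X} (h : x = x') : FundamentalGroup X x ≃* FundamentalGroup X x' := by
  subst h; exact MulEquiv.refl _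

/-- `f₁*π₁(A, a)`, the image of the fundamental group of `A` in the fundamental group of `B`,
based at a point `x` equal to `f a`. -/
def imageSubgroup {A : Type u} [TopologicalSpace A]
    (f : C(A, X)) (a : A) (x : X) (h : f a = x) : Subgroup (FundamentalGroup X x) :=
  Subgroup.map (eqCast h).toMonoidHom (π₁map f a).range

/-- `i_*π₁(U, x)`, the image of the fundamental group of `U` in the fundamental group of `X`
under the inclusion-induced homomorphism. -/
def iStar (x : X) (U : Set X) (hx : x ∈ U) : Subgroup (FundamentalGroup X x) :=
  imageSubgroup ⟨(Subtype.val : U → X), continuous_subtype_val⟩ ⟨x, hx⟩ x rfl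

/-- The set of homotopy classes of small loops at `x` :
loops which have a representative in every open neighbourhood of `x`. -/
def smallSet (x : X) : Set (FundamentalGroup X x) :=
  { g | ∀ (U : Set X) (_ : IsOpen U) (hx : x ∈ U), g ∈ iStar x U hx }

/-- Conjugation of a loop class at `x` along a path `α` from `x₀` to `x` :
`g ↦ [α ∗ g ∗ α⁻¹]`. -/
def conjAlong {x₀ x : X} (α : Path x₀ x) (g : FundamentalGroup X x) : FundamentalGroup X x₀ :=
  (FundamentalGroup.fundamentalGroupMulEquivOfPath α).symm g

/-- The subgroup `[α⁻¹ H α]` of `π₁(X, x)` for a path `α` from `x₀` to `x` and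
`H ≤ π₁(X, x₀)`. -/
def conjSubgroup {x₀ x : X} (α : Path x₀ x) (H : Subgroup (FundamentalGroup X x₀)) :
    Subgroup (FundamentalGroup X x) :=
  Subgroup.map (FundamentalGroup.fundamentalGroupMulEquivOfPath α).toMonoidHom H

/-- `π₁^sg(X, x₀)`: the subgroup generated by small loops conjugated along paths from `x₀`. -/
def sgSubgroup (x₀ : X) : Subgroup (FundamentalGroup X x₀) :=
  Subgroup.closure { g | ∃ (x : X) (α : Path x₀ x) (s : FundamentalGroup X x),
    s ∈ smallSet x ∧ g = conjAlong α s }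

/-- The Spanier group of an open cover. -/
def spanierGroup (x₀ : X) (𝒰 : Set (Set X)) : Subgroup (FundamentalGroup X x₀) :=
  Subgroup.closure { g | ∃ (x : X) (α : Path x₀ x) (U : Set X) (_ : U ∈ 𝒰) (β : Path x x),
    Set.range β ⊆ U ∧ g = conjAlong α (loopClass β) }

/-- `X` is semilocally small generated (at `x₀`). -/
def SemilocallySmallGenerated (x₀ : X) : Prop :=
  ∃ 𝒰 : Set (Set X), (∀ U ∈ 𝒰, IsOpen U) ∧ ⋃₀ 𝒰 = Set.univ ∧
    spanierGroup x₀ 𝒰 ≤ sgSubgroup x₀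

/-- `X` is homotopically Hausdorff relative to the subgroup `H`. -/
def HomotopicallyHausdorffRel (x₀ : X) (H : Subgroup (FundamentalGroup X x₀)) : Prop :=
  ∀ (x : X) (α : Path x₀ x) (g : FundamentalGroup X x₀), g ∉ H →
    ∃ U : Set X, IsOpen U ∧ x ∈ U ∧
      ∀ γ : Path x x, Set.range γ ⊆ U → ¬ ∃ h ∈ H, conjAlong α (loopClass γ) = h * g

/-- The quasitopological fundamental group topology: the quotient topology induced by the
compact-open topology on the loop space. -/
def qtop (X : Type u) [TopologicalSpace X] (x : X) : TopologicalSpace (FundamentalGroup X x) :=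
  TopologicalSpace.coinduced (fun γ : Path x x => loopClass γ) inferInstance

/-- The basic sets of the whisker topology on the fundamental group. -/
def whBasis (X : Type u) [TopologicalSpace X] (x₀ : X) : Set (Set (FundamentalGroup X x₀)) :=
  { S | ∃ (g : FundamentalGroup X x₀) (U : Set X) (_ : IsOpen U) (hx : x₀ ∈ U),
      S = (g * ·) '' (iStar x₀ U hx : Set (FundamentalGroup X x₀)) }

/-- The whisker topology on the fundamental group. -/
def whTop (X : Type u) [TopologicalSpace X] (x₀ : X) :
    TopologicalSpace (FundamentalGroup X x₀) :=
  TopologicalSpace.generateFrom (whBasis X x₀)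

/-- The unique lifting property for a pointed map `p : (X', x') → (X, p x')`. -/
def HasUL {X' : Type u} [TopologicalSpace X'] (p : C(X', X)) (x' : X') : Prop :=
  ∀ (Y : Type u) (_ : TopologicalSpace Y) (y : Y), ConnectedSpace Y → LocPathConnectedSpace Y →
    ∀ (f : C(Y, X)) (hf : f y = p x'),
      imageSubgroup f y (p x') hf ≤ imageSubgroup p x' (p x') rfl →
      ∃! g : C(Y, X'), g y = x' ∧ p.comp g = f

/-- `H` is a generalized covering subgroup of `π₁(X, x₀)`. -/
def IsGCSubgroup (x₀ : X) (H : Subgroup (FundamentalGroup X x₀)) : Prop :=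
  ∃ (X' : Type u) (_ : TopologicalSpace X') (x' : X') (p : C(X', X)) (hp : p x' = x₀),
    ConnectedSpace X' ∧ LocPathConnectedSpace X' ∧ HasUL p x' ∧ imageSubgroup p x' x₀ hp = H

/-- `π₁^gc(X, x₀)`: the intersection of all generalized covering subgroups. -/
def gcSubgroup (X : Type u) [TopologicalSpace X] (x₀ : X) : Subgroup (FundamentalGroup X x₀) :=
  sInf { H | IsGCSubgroup x₀ H }

/-- Unique path lifting: paths lift with prescribed initial point, and lifts with the same
initial point are unique. -/
def UniquePathLifts {X' : Type u} [TopologicalSpace X'] (p : X' → X) : Prop :=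
  (∀ (γ : C(I, X)) (x' : X'), p x' = γ 0 → ∃ γ' : C(I, X'), γ' 0 = x' ∧ p ∘ γ' = γ) ∧
  (∀ γ₁ γ₂ : C(I, X'), γ₁ 0 = γ₂ 0 → p ∘ γ₁ = p ∘ γ₂ → γ₁ = γ₂)

/-- `H` is a semicovering subgroup of `π₁(X, x₀)`. -/
def IsSemicoveringSubgroup (x₀ : X) (H : Subgroup (FundamentalGroup X x₀)) : Prop :=
  ∃ (X' : Type u) (_ : TopologicalSpace X') (x' : X') (p : C(X', X)) (hp : p x' = x₀),
    ConnectedSpace X' ∧ LocPathConnectedSpace X' ∧ Function.Surjective p ∧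
    IsLocalHomeomorph p ∧ UniquePathLifts (p : X' → X) ∧ imageSubgroup p x' x₀ hp = H

/-- `H` is a covering subgroup of `π₁(X, x₀)`. -/
def IsCoveringSubgroup (x₀ : X) (H : Subgroup (FundamentalGroup X x₀)) : Prop :=
  ∃ (X' : Type u) (_ : TopologicalSpace X') (x' : X') (p : C(X', X)) (hp : p x' = x₀),
    ConnectedSpace X' ∧ LocPathConnectedSpace X' ∧ IsCoveringMap p ∧ imageSubgroup p x' x₀ hp = H

/-- `X` is semilocally `K`-connected at `x`. -/
def SemilocallyConnectedAt (x : X) (K : Subgroup (FundamentalGroup X x)) : Prop :=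
  ∃ (U : Set X) (_ : IsOpen U) (hx : x ∈ U), iStar x U hx ≤ K

section WhiskerSpace

variable {X : Type u} [TopologicalSpace X] {x₀ : X}

/-- The space of paths in `X` starting at `x₀`, recorded with their endpoints. -/
def PathStar (x₀ : X) : Type u := Σ x : X, Path x₀ x

/-- The relation identifying two paths `α, β` from `x₀` when they have the same endpoint and
`[α ∗ β⁻¹] ∈ H`. -/
def whiskerRel (H : Subgroup (FundamentalGroup X x₀)) :
    PathStar x₀ → PathStar x₀ → Prop := fun a b =>
  ∃ h : b.1 = a.1, loopClass (a.2.trans (h ▸ b.2 : Path x₀ a.1).symm) ∈ H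

/-- The space `X̃_H` of `∼_H`-classes of paths starting at `x₀`. -/
def XH (H : Subgroup (FundamentalGroup X x₀)) : Type u := Quot (whiskerRel H)

/-- The endpoint projection `p_H : X̃_H → X`. -/
def pH (H : Subgroup (FundamentalGroup X x₀)) : XH H → X :=
  Quot.lift (fun a => a.1) (by rintro a b ⟨h, -⟩; exact h.symm)

/-- The point of `X̃_H` given by the class of a path from `x₀`. -/
def XH.mk (H : Subgroup (FundamentalGroup X x₀)) (a : PathStar x₀) : XH H :=
  Quot.mk (whiskerRel H) a

/-- The basepoint `ẽ_H` of `X̃_H`: the class of the constant path at `x₀`. -/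
def eH (H : Subgroup (FundamentalGroup X x₀)) : XH H :=
  XH.mk H ⟨x₀, Path.refl x₀⟩

/-- The basic set `(U, ⟨α⟩_H)` of the whisker topology on `X̃_H`: classes of continuations of
`α` inside `U`. -/
def contSet (H : Subgroup (FundamentalGroup X x₀)) (a : PathStar x₀) (U : Set X) :
    Set (XH H) :=
  { z | ∃ (y : X) (γ : Path a.1 y), Set.range γ ⊆ U ∧ z = XH.mk H ⟨y, a.2.trans γ⟩ }

/-- The whisker topology on `X̃_H`. -/
instance XH.topologicalSpace (H : Subgroup (FundamentalGroup X x₀)) :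
    TopologicalSpace (XH H) :=
  TopologicalSpace.generateFrom
    { S | ∃ (a : PathStar x₀) (U : Set X), IsOpen U ∧ S = contSet H a U }

lemma XH.mk_trans_refl (H : Subgroup (FundamentalGroup X x₀)) (a : PathStar x₀) :
    XH.mk H ⟨a.1, a.2.trans (Path.refl a.1)⟩ = XH.mk H a := by
  apply Quot.sound
  refine ⟨rfl, ?_⟩
  have h1 : (a.2.trans (Path.refl a.1)).Homotopic a.2 := ⟨Path.Homotopy.transRefl a.2⟩
  have h2 : ((a.2.trans (Path.refl a.1)).trans a.2.symm).Homotopic (a.2.trans a.2.symm) :=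
    h1.hcomp (Path.Homotopic.refl _)
  have h3 : (a.2.trans a.2.symm).Homotopic (Path.refl x₀) :=
    ⟨(Path.Homotopy.reflTransSymm a.2).symm⟩
  have : loopClass ((a.2.trans (Path.refl a.1)).trans a.2.symm) = 1 := by
    exact (Quotient.sound (h2.trans h3) : _ = (⟦Path.refl x₀⟧ : Path.Homotopic.Quotient x₀ x₀))
  exact this ▸ H.one_mem

lemma continuous_pH (H : Subgroup (FundamentalGroup X x₀)) : Continuous (pH H) := by
  rw [continuous_def]
  intro U hU
  have : pH H ⁻¹' U = ⋃ (a : PathStar x₀) (_ : a.1 ∈ U), contSet H a U := by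
    ext z
    constructor
    · intro hz
      obtain ⟨a, rfl⟩ := Quot.exists_rep z
      refine Set.mem_iUnion₂.mpr ⟨a, hz, a.1, Path.refl a.1, ?_, (XH.mk_trans_refl H a).symm⟩
      rw [Path.refl_range]
      exact Set.singleton_subset_iff.mpr hz
    · intro hz
      obtain ⟨a, ha, y, γ, hγ, rfl⟩ := Set.mem_iUnion₂.mp hz
      have : y ∈ U := hγ ⟨1, γ.target⟩
      exact this
  rw [this]
  exact isOpen_iUnion fun a => isOpen_iUnion fun ha =>
    TopologicalSpace.isOpen_generateFrom_of_mem ⟨a, U, hU, rfl⟩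

/-- The endpoint projection `p_H` as a continuous map. -/
def pHMap (H : Subgroup (FundamentalGroup X x₀)) : C(XH H, X) :=
  ⟨pH H, continuous_pH H⟩

end WhiskerSpace

end GCPaper

open GCPaper

namespace GCS4

open TopologicalSpace Set

variable {X : Type u} [TopologicalSpace X]

section FG

lemma loopClass_surjective {x : X} (g : FundamentalGroup X x) :
    ∃ γ : Path x x, loopClass γ = g := by
  obtain ⟨γ, hγ⟩ := Quotient.exists_rep
    (g : Path.Homotopic.Quotient (X := X) x x)
  exact ⟨γ, hγ⟩

lemma loopClass_eq_iff {x : X} (γ γ' : Path x x) :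
    loopClass γ = loopClass γ' ↔ γ.Homotopic γ' := by
  constructor
  · intro h
    exact Quotient.exact (h : (⟦γ⟧ : Path.Homotopic.Quotient x x) = ⟦γ'⟧)
  · intro h
    exact Quotient.sound h

lemma π₁map_loopClass {A B : Type u} [TopologicalSpace A] [TopologicalSpace B]
    (f : C(A, B)) {a : A} (γ : Path a a) :
    π₁map f a (loopClass γ) = loopClass (γ.map f.continuous) := by
  rfl

@[simp] lemma eqCast_rfl {x : X} (g : FundamentalGroup X x) :
    eqCast rfl g = g := rfl

lemma eqCast_trans {x y z : X} (h1 : x = y) (h2 : y = z) (g : FundamentalGroup X x) :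
    eqCast h2 (eqCast h1 g) = eqCast (h1.trans h2) g := by
  subst h1; subst h2; rfl

lemma eqCast_loopClass {x y : X} (h : x = y) (γ : Path x x) :
    eqCast h (loopClass γ) = loopClass (γ.cast h.symm h.symm) := by
  subst h
  rfl

lemma mem_imageSubgroup_iff {A : Type u} [TopologicalSpace A] (f : C(A, X)) (a : A)
    (x : X) (h : f a = x) (g : FundamentalGroup X x) :
    g ∈ imageSubgroup f a x h ↔ ∃ δ : Path a a, eqCast h (π₁map f a (loopClass δ)) = g := by
  constructor
  · rintro ⟨g', ⟨g'', rfl⟩, rfl⟩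
    obtain ⟨δ, rfl⟩ := loopClass_surjective g''
    exact ⟨δ, rfl⟩
  · rintro ⟨δ, rfl⟩
    exact ⟨_, ⟨loopClass δ, rfl⟩, rfl⟩

lemma subsingleton_fundamentalGroup {A : Type u} [TopologicalSpace A]
    [SimplyConnectedSpace A] (a : A) : Subsingleton (FundamentalGroup A a) := by
  constructor
  intro g h
  exact Subsingleton.elim (α := Path.Homotopic.Quotient (X := A) a a) g h

lemma imageSubgroup_le_of_simplyConnected {A : Type u} [TopologicalSpace A]
    [SimplyConnectedSpace A] (f : C(A, X)) (a : A) (x : X) (h : f a = x)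
    (S : Subgroup (FundamentalGroup X x)) : imageSubgroup f a x h ≤ S := by
  rintro g hg
  rw [mem_imageSubgroup_iff] at hg
  obtain ⟨δ, rfl⟩ := hg
  have : loopClass δ = (1 : FundamentalGroup A a) :=
    (subsingleton_fundamentalGroup a).elim _ _
  rw [this]
  simp only [map_one]
  exact S.one_mem

end FG

section Instances

lemma convex_locPathConnectedSpace {E : Type*} [NormedAddCommGroup E] [NormedSpace ℝ E]
    {s : Set E} (hs : Convex ℝ s) : LocPathConnectedSpace s := by
  refine LocPathConnectedSpace.of_bases (p := fun x (ε : ℝ) => 0 < ε)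
    (s := fun x ε => Subtype.val ⁻¹' Metric.ball (x : E) ε) (fun x => ?_) (fun x ε hε => ?_)
  · rw [nhds_subtype_eq_comap]
    exact Metric.nhds_basis_ball.comap _
  · rw [Topology.IsInducing.subtypeVal.isPathConnected_iff]
    rw [Subtype.image_preimage_coe]
    exact (hs.inter (convex_ball _ _)).isPathConnected
      ⟨x, x.2, Metric.mem_ball_self hε⟩

instance : LocallyPathConnectedSpace I :=
  convex_locPathConnectedSpace (convex_Icc (0 : ℝ) 1)

/-- The unit square as a convex subset of the plane. -/
def sqHomeo : (I × I) ≃ₜ ↥((Icc (0:ℝ) 1) ×ˢ (Icc (0:ℝ) 1)) :=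
  (Homeomorph.Set.prod (Icc (0:ℝ) 1) (Icc (0:ℝ) 1)).symm

instance : LocallyPathConnectedSpace (I × I) := by
  have : LocallyPathConnectedSpace ↥((Icc (0:ℝ) 1) ×ˢ (Icc (0:ℝ) 1)) :=
    convex_locPathConnectedSpace ((convex_Icc (0:ℝ) 1).prod (convex_Icc (0:ℝ) 1))
  exact sqHomeo.isOpenEmbedding.locPathConnectedSpace

instance : ContractibleSpace (I × I) := by
  have : ContractibleSpace ↥((Icc (0:ℝ) 1) ×ˢ (Icc (0:ℝ) 1)) :=
    ((convex_Icc (0:ℝ) 1).prod (convex_Icc (0:ℝ) 1)).contractibleSpace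
      ⟨((0:ℝ), (0:ℝ)), by constructor <;> exact ⟨le_refl _, zero_le_one⟩⟩
  exact sqHomeo.contractibleSpace

instance : ContractibleSpace I :=
  (convex_Icc (0 : ℝ) 1).contractibleSpace ⟨0, le_refl _, zero_le_one⟩

instance {w : Type w'} [TopologicalSpace w] [LocallyPathConnectedSpace w] :
    LocallyPathConnectedSpace (ULift.{w''} w) :=
  (Homeomorph.ulift (X := w)).isOpenEmbedding.locPathConnectedSpace

instance {w : Type w'} [TopologicalSpace w] [ContractibleSpace w] :
    ContractibleSpace (ULift.{w''} w) :=
  (Homeomorph.ulift (X := w)).contractibleSpace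

end Instances

section Lpc

variable (Z : Type u') [TopologicalSpace Z]

/-- Type synonym carrying the locally path connected coreflection topology. -/
def Lpc : Type u' := Z

variable {Z}

/-- Identity map into the coreflection. -/
def Lpc.mk : Z → Lpc Z := id

/-- Identity map out of the coreflection. -/
def Lpc.down : Lpc Z → Z := id

attribute [irreducible] Lpc

variable (Z) in
/-- The basis of the coreflection topology. -/
def LpcB : Set (Set (Lpc Z)) :=
  { S | ∃ (z : Z) (U : Set Z), IsOpen U ∧ z ∈ U ∧ S = Lpc.mk '' pathComponentIn U z }

instance : TopologicalSpace (Lpc Z) := generateFrom (LpcB Z)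

lemma Lpc.mk_down (w : Lpc Z) : Lpc.mk (Lpc.down w) = w := rfl

lemma Lpc.mem_mk_image {S : Set Z} {w : Lpc Z} : w ∈ Lpc.mk '' S ↔ Lpc.down w ∈ S := by
  constructor
  · rintro ⟨a, ha, rfl⟩; exact ha
  · intro h; exact ⟨Lpc.down w, h, rfl⟩

lemma Lpc.mk_image_subset {S T : Set Z} (h : S ⊆ T) : Lpc.mk '' S ⊆ Lpc.mk '' T :=
  Set.image_mono h

lemma Lpc.isTopologicalBasis : IsTopologicalBasis (LpcB Z) := by
  refine ⟨?_, ?_, rfl⟩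
  · rintro t₁ ⟨z₁, U₁, hU₁, hz₁, rfl⟩ t₂ ⟨z₂, U₂, hU₂, hz₂, rfl⟩ x ⟨hx₁, hx₂⟩
    rw [Lpc.mem_mk_image] at hx₁ hx₂
    set w := Lpc.down x with hw
    have hwU₁ : w ∈ U₁ := pathComponentIn_subset hx₁
    have hwU₂ : w ∈ U₂ := pathComponentIn_subset hx₂
    refine ⟨Lpc.mk '' pathComponentIn (U₁ ∩ U₂) w,
      ⟨w, U₁ ∩ U₂, hU₁.inter hU₂, ⟨hwU₁, hwU₂⟩, rfl⟩, ?_, Set.subset_inter ?_ ?_⟩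
    · exact ⟨w, mem_pathComponentIn_self ⟨hwU₁, hwU₂⟩, rfl⟩
    · refine (Lpc.mk_image_subset ?_)
      rw [← pathComponentIn_congr hx₁]
      exact pathComponentIn_mono Set.inter_subset_left
    · refine (Lpc.mk_image_subset ?_)
      rw [← pathComponentIn_congr hx₂]
      exact pathComponentIn_mono Set.inter_subset_right
  · apply Set.eq_univ_of_forall
    intro x
    refine Set.mem_sUnion.mpr ⟨Lpc.mk '' pathComponentIn Set.univ (Lpc.down x),
      ⟨Lpc.down x, Set.univ, isOpen_univ, Set.mem_univ _, rfl⟩, ?_⟩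
    exact Lpc.mem_mk_image.mpr (mem_pathComponentIn_self (Set.mem_univ _))

lemma Lpc.continuous_down : Continuous (Lpc.down : Lpc Z → Z) := by
  rw [continuous_def]
  intro U hU
  rw [Lpc.isTopologicalBasis.isOpen_iff]
  intro a ha
  exact ⟨Lpc.mk '' pathComponentIn U (Lpc.down a), ⟨Lpc.down a, U, hU, ha, rfl⟩,
    Lpc.mem_mk_image.mpr (mem_pathComponentIn_self ha),
    fun b hb => (pathComponentIn_subset (Lpc.mem_mk_image.mp hb) : Lpc.down b ∈ U)⟩

lemma Lpc.continuous_mk_comp {Y : Type*} [TopologicalSpace Y] [LocallyPathConnectedSpace Y]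
    {f : Y → Z} (hf : Continuous f) : Continuous (fun y => Lpc.mk (f y) : Y → Lpc Z) := by
  rw [continuous_generateFrom_iff]
  rintro S ⟨z, U, hU, hz, rfl⟩
  rw [isOpen_iff_mem_nhds]
  intro y hy
  have h1 : f y ∈ pathComponentIn U z := Lpc.mem_mk_image.mp hy
  have hyU : y ∈ f ⁻¹' U := (pathComponentIn_subset h1 : f y ∈ U)
  have h2 : IsOpen (pathComponentIn (f ⁻¹' U) y) := (hU.preimage hf).pathComponentIn y
  refine Filter.mem_of_superset (h2.mem_nhds (mem_pathComponentIn_self hyU)) ?_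
  intro y' hy'
  show Lpc.mk (f y') ∈ Lpc.mk '' pathComponentIn U z
  rw [Lpc.mem_mk_image]
  show f y' ∈ pathComponentIn U z
  rw [← pathComponentIn_congr h1]
  have himg : f '' pathComponentIn (f ⁻¹' U) y ⊆ pathComponentIn U (f y) :=
    ((isPathConnected_pathComponentIn hyU).image hf).subset_pathComponentIn
      ⟨y, mem_pathComponentIn_self hyU, rfl⟩
      (by rintro _ ⟨w, hw, rfl⟩; exact (pathComponentIn_subset hw : w ∈ f ⁻¹' U))
  exact himg ⟨y', hy', rfl⟩

/-- Transport a path through the coreflection. -/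
def Lpc.mapPath {a b : Z} (γ : Path a b) : Path (Lpc.mk a) (Lpc.mk b) where
  toFun := fun t => Lpc.mk (γ t)
  continuous_toFun := Lpc.continuous_mk_comp γ.continuous
  source' := congrArg Lpc.mk γ.source
  target' := congrArg Lpc.mk γ.target

lemma Lpc.isPathConnected_image {S : Set Z} (h : IsPathConnected S) :
    IsPathConnected (Lpc.mk '' S) := by
  obtain ⟨b, hb, hj⟩ := h
  refine ⟨Lpc.mk b, ⟨b, hb, rfl⟩, ?_⟩
  rintro _ ⟨a, ha, rfl⟩
  obtain ⟨γ, hγ⟩ := hj ha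
  exact ⟨Lpc.mapPath γ, fun t => ⟨γ t, hγ t, rfl⟩⟩

instance : LocallyPathConnectedSpace (Lpc Z) := by
  refine LocPathConnectedSpace.of_bases
    (p := fun (x : Lpc Z) (t : Set (Lpc Z)) => t ∈ LpcB Z ∧ x ∈ t) (s := fun _ t => t)
    (fun x => Lpc.isTopologicalBasis.nhds_hasBasis) ?_
  rintro x t ⟨⟨z, U, hU, hz, rfl⟩, hx⟩
  exact Lpc.isPathConnected_image (isPathConnected_pathComponentIn hz)

lemma Lpc.pathConnectedSpace [PathConnectedSpace Z] : PathConnectedSpace (Lpc Z) := by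
  constructor
  · exact ⟨Lpc.mk (Nonempty.some PathConnectedSpace.nonempty)⟩
  · intro x y
    obtain ⟨γ⟩ := @PathConnectedSpace.joined Z ‹TopologicalSpace Z› ‹_› (Lpc.down x) (Lpc.down y)
    exact ⟨Lpc.mapPath γ⟩

lemma pathConnectedSpace_pathComponent {P : Type*} [TopologicalSpace P] (z : P) :
    PathConnectedSpace (pathComponent z) := by
  rw [← isPathConnected_iff_pathConnectedSpace, ← pathComponentIn_univ]
  exact isPathConnected_pathComponentIn (Set.mem_univ z)

end Lpc

section UL

variable {X' : Type u} [TopologicalSpace X'] (p : C(X', X)) (x' : X')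

lemma unique_of_lifts (hUL : HasUL p x') (f : C(ULift.{u} I, X)) (hf : f ⟨0⟩ = p x')
    {g₁ g₂ : C(ULift.{u} I, X')} (h₁ : g₁ ⟨0⟩ = x') (h₂ : g₂ ⟨0⟩ = x')
    (hp₁ : p.comp g₁ = f) (hp₂ : p.comp g₂ = f) : g₁ = g₂ := by
  obtain ⟨g, -, hu⟩ := hUL (ULift.{u} I) inferInstance ⟨0⟩ inferInstance (inferInstance : LocallyPathConnectedSpace _) f hf
    (imageSubgroup_le_of_simplyConnected _ _ _ _ _)
  exact (hu g₁ ⟨h₁, hp₁⟩).trans (hu g₂ ⟨h₂, hp₂⟩).symm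

lemma exists_loop_lift (hUL : HasUL p x') {x₀ : X} (hp : p x' = x₀) (γ : Path x₀ x₀)
    (hγ : loopClass γ ∈ imageSubgroup p x' x₀ hp) :
    ∃ δ : Path x' x', ∀ t, p (δ t) = γ t := by
  rw [mem_imageSubgroup_iff] at hγ
  obtain ⟨δ₀, hδ₀⟩ := hγ
  rw [π₁map_loopClass, eqCast_loopClass] at hδ₀
  set β : Path x₀ x₀ := (δ₀.map p.continuous).cast hp.symm hp.symm with hβ
  have hβt : ∀ t, β t = p (δ₀ t) := fun t => rfl
  obtain ⟨F⟩ : β.Homotopic γ := (loopClass_eq_iff β γ).mp hδ₀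
  set f : C(ULift.{u} (I × I), X) :=
    (F.toHomotopy.toContinuousMap).comp ⟨ULift.down, continuous_uliftDown⟩ with hfdef
  have hfval : ∀ s t : I, f ⟨(s, t)⟩ = F (s, t) := fun s t => rfl
  have hf : f ⟨(0, 0)⟩ = p x' := by
    rw [hfval, F.apply_zero]
    show β 0 = p x'
    rw [β.source]; exact hp.symm
  obtain ⟨K, ⟨hK0, hKp⟩, -⟩ := hUL (ULift.{u} (I × I)) inferInstance ⟨(0, 0)⟩
    inferInstance (inferInstance : LocallyPathConnectedSpace _) f hf (imageSubgroup_le_of_simplyConnected _ _ _ _ _)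
  have hKval : ∀ z : I × I, p (K ⟨z⟩) = f ⟨z⟩ := fun z => ContinuousMap.congr_fun hKp ⟨z⟩
  -- bottom edge is constant
  set c1 : C(ULift.{u} I, ULift.{u} (I × I)) := ⟨fun s => ⟨(s.down, 0)⟩,
    continuous_uliftUp.comp (continuous_uliftDown.prodMk continuous_const)⟩ with hc1
  have hbot : K.comp c1 = ContinuousMap.const _ x' := by
    refine unique_of_lifts p x' hUL (f.comp c1) ?_ ?_ rfl ?_ ?_
    · show f ⟨((0 : I), (0 : I))⟩ = p x'
      exact hf
    · exact hK0
    · rw [← ContinuousMap.comp_assoc, hKp]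
    · ext s
      show p x' = f ⟨(s.down, 0)⟩
      rw [hfval, F.source]
      exact hp
  have hKbot : ∀ s : I, K ⟨(s, 0)⟩ = x' := fun s => ContinuousMap.congr_fun hbot ⟨s⟩
  -- left edge is the original loop δ₀
  set c2 : C(ULift.{u} I, ULift.{u} (I × I)) := ⟨fun t => ⟨(0, t.down)⟩,
    continuous_uliftUp.comp (continuous_const.prodMk continuous_uliftDown)⟩ with hc2
  set δul : C(ULift.{u} I, X') := ⟨fun t => δ₀ t.down, δ₀.continuous.comp continuous_uliftDown⟩ with hδul
  have hleft : K.comp c2 = δul := by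
    refine unique_of_lifts p x' hUL (f.comp c2) ?_ ?_ ?_ ?_ ?_
    · show f ⟨((0 : I), (0 : I))⟩ = p x'
      exact hf
    · exact hK0
    · show δ₀ 0 = x'
      exact δ₀.source
    · rw [← ContinuousMap.comp_assoc, hKp]
    · ext t
      show p (δ₀ t.down) = f ⟨(0, t.down)⟩
      rw [hfval, F.apply_zero]
      exact (hβt t.down).symm
  have hK01 : K ⟨((0 : I), (1 : I))⟩ = x' := by
    have h := ContinuousMap.congr_fun hleft ⟨(1 : I)⟩
    exact (show K ⟨((0 : I), (1 : I))⟩ = δ₀ 1 from h).trans δ₀.target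
  -- top edge is constant
  set c3 : C(ULift.{u} I, ULift.{u} (I × I)) := ⟨fun s => ⟨(s.down, 1)⟩,
    continuous_uliftUp.comp (continuous_uliftDown.prodMk continuous_const)⟩ with hc3
  have htop : K.comp c3 = ContinuousMap.const _ x' := by
    refine unique_of_lifts p x' hUL (f.comp c3) ?_ ?_ rfl ?_ ?_
    · show f ⟨((0 : I), (1 : I))⟩ = p x'
      rw [hfval, F.target]
      exact hp.symm
    · exact hK01
    · rw [← ContinuousMap.comp_assoc, hKp]
    · ext s
      show p x' = f ⟨(s.down, 1)⟩
      rw [hfval, F.target]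
      exact hp
  have hKtop : ∀ s : I, K ⟨(s, 1)⟩ = x' := fun s => ContinuousMap.congr_fun htop ⟨s⟩
  -- the right edge is a loop lifting γ
  refine ⟨⟨⟨fun t => K ⟨(1, t)⟩,
    K.continuous.comp (continuous_uliftUp.comp (continuous_const.prodMk continuous_id))⟩,
    hKbot 1, hKtop 1⟩, ?_⟩
  intro t
  show p (K ⟨(1, t)⟩) = γ t
  rw [hKval, hfval, F.apply_one]
  rfl

end UL

lemma joined_of_path {P : Type*} [TopologicalSpace P] {a b : P} (Γ : Path a b) (t : I) :
    Joined a (Γ t) :=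
  ⟨(Γ.truncate 0 ↑t).cast (by rw [min_eq_left t.2.1, Path.extend_zero])
    (Γ.extend_extends' t).symm⟩

section Pullback

variable (x₀ : X) {ι : Type u} (Xt : ι → Type u) [iT : ∀ j, TopologicalSpace (Xt j)]
  (xt : ∀ j, Xt j) (pt : ∀ j, C(Xt j, X)) (hpt : ∀ j, pt j (xt j) = x₀)

/-- The fibred product of the family, recording the common image point. -/
abbrev PB : Type u := { z : X × (∀ j, Xt j) // ∀ j, pt j (z.2 j) = z.1 }

/-- The basepoint of the fibred product. -/
def pbBase : PB Xt pt := ⟨(x₀, xt), hpt⟩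

/-- The lpc coreflection of the path component of the basepoint in the fibred product. -/
abbrev XP : Type u := Lpc ↥(pathComponent (pbBase x₀ Xt xt pt hpt))

/-- The basepoint of `XP`. -/
def xP : XP x₀ Xt xt pt hpt := Lpc.mk ⟨pbBase x₀ Xt xt pt hpt, mem_pathComponent_self _⟩

/-- The projection to `X`. -/
def pP : C(XP x₀ Xt xt pt hpt, X) :=
  ⟨fun z => (Lpc.down z).val.val.1,
    continuous_fst.comp (continuous_subtype_val.comp
      (continuous_subtype_val.comp Lpc.continuous_down))⟩

/-- The projection to the `j`-th factor. -/
def qP (j : ι) : C(XP x₀ Xt xt pt hpt, Xt j) :=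
  ⟨fun z => (Lpc.down z).val.val.2 j,
    ((continuous_apply j).comp continuous_snd).comp (continuous_subtype_val.comp
      (continuous_subtype_val.comp Lpc.continuous_down))⟩

lemma pathConnectedSpace_XP : PathConnectedSpace (XP x₀ Xt xt pt hpt) :=
  letI := pathConnectedSpace_pathComponent (pbBase x₀ Xt xt pt hpt)
  Lpc.pathConnectedSpace

lemma imageSubgroup_pP_le (j : ι) :
    imageSubgroup (pP x₀ Xt xt pt hpt) (xP x₀ Xt xt pt hpt) x₀ rfl ≤
      imageSubgroup (pt j) (xt j) x₀ (hpt j) := by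
  intro g hg
  replace hg := (mem_imageSubgroup_iff _ _ _ _ _).mp hg
  refine (mem_imageSubgroup_iff _ _ _ _ _).mpr ?_
  obtain ⟨δ, hδ⟩ := hg
  replace hδ : loopClass (δ.map (pP x₀ Xt xt pt hpt).continuous) = g := by
    rw [← π₁map_loopClass]; exact hδ
  refine ⟨δ.map (qP x₀ Xt xt pt hpt j).continuous, ?_⟩
  refine (congrArg (eqCast (hpt j)) (π₁map_loopClass _ _)).trans ?_
  refine (eqCast_loopClass _ _).trans ?_
  rw [← hδ]
  refine congrArg loopClass ?_
  ext t
  exact (Lpc.down (δ t)).val.2 j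

lemma hasUL_pP (hULt : ∀ j, HasUL (pt j) (xt j)) :
    HasUL (pP x₀ Xt xt pt hpt) (xP x₀ Xt xt pt hpt) := by
  intro Y tY y hcY hlY f hf hsub
  haveI := hcY; haveI : LocallyPathConnectedSpace Y := hlY
  haveI : PathConnectedSpace Y := pathConnectedSpace_iff_connectedSpace.mpr hcY
  have hf0 : f y = x₀ := hf
  -- transfer of the subgroup condition to each factor
  have hsub' : ∀ j, imageSubgroup f y (pt j (xt j)) (hf0.trans (hpt j).symm) ≤
      imageSubgroup (pt j) (xt j) (pt j (xt j)) rfl := by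
    intro j g' hg'
    rw [mem_imageSubgroup_iff] at hg'
    obtain ⟨δ, hδ⟩ := hg'
    have h1 : eqCast hf0 (π₁map f y (loopClass δ)) = eqCast (hpt j) g' := by
      rw [← hδ, eqCast_trans]
    have h2 : eqCast (hpt j) g' ∈ imageSubgroup f y x₀ hf0 :=
      (mem_imageSubgroup_iff f y x₀ hf0 _).mpr ⟨δ, h1⟩
    have h3 : eqCast (hpt j) g' ∈ imageSubgroup (pP x₀ Xt xt pt hpt) (xP x₀ Xt xt pt hpt)
        x₀ rfl := hsub h2
    have h4 := imageSubgroup_pP_le x₀ Xt xt pt hpt j h3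
    rw [mem_imageSubgroup_iff] at h4
    obtain ⟨δ'', h''⟩ := h4
    refine (mem_imageSubgroup_iff _ _ _ _ _).mpr ⟨δ'', ?_⟩
    rw [eqCast_rfl]
    exact (eqCast (hpt j)).injective h''
  have lifts := fun j => hULt j Y tY y hcY hlY f (hf0.trans (hpt j).symm) (hsub' j)
  choose g hgprop hgu using lifts
  -- the combined lift
  set G : Y → PB Xt pt :=
    fun z => ⟨(f z, fun j => g j z), fun j => ContinuousMap.congr_fun (hgprop j).2 z⟩ with hGdef
  have hGc : Continuous G := by
    apply Continuous.subtype_mk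
    exact f.continuous.prodMk (continuous_pi fun j => (g j).continuous)
  have hGy : G y = pbBase x₀ Xt xt pt hpt :=
    Subtype.ext (Prod.ext hf0 (funext fun j => (hgprop j).1))
  have hGmem : ∀ z, G z ∈ pathComponent (pbBase x₀ Xt xt pt hpt) := by
    intro z
    obtain ⟨π⟩ := PathConnectedSpace.joined y z
    exact ⟨(π.map hGc).cast hGy.symm rfl⟩
  set G' : C(Y, XP x₀ Xt xt pt hpt) :=
    ⟨fun z => Lpc.mk ⟨G z, hGmem z⟩, Lpc.continuous_mk_comp (hGc.subtype_mk hGmem)⟩ with hG'def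
  refine ⟨G', ⟨?_, ?_⟩, ?_⟩
  · exact congrArg Lpc.mk (Subtype.ext hGy)
  · ext z; rfl
  · rintro g' ⟨hg'y, hg'p⟩
    have hcoord : ∀ j, (qP x₀ Xt xt pt hpt j).comp g' = g j := by
      intro j
      apply hgu j
      constructor
      · show (Lpc.down (g' y)).val.val.2 j = xt j
        rw [hg'y]
        rfl
      · ext z
        show pt j ((Lpc.down (g' z)).val.val.2 j) = f z
        exact ((Lpc.down (g' z)).val.2 j).trans (ContinuousMap.congr_fun hg'p z)
    ext z
    have h1 : Lpc.down (g' z) = Lpc.down (G' z) := by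
      apply Subtype.ext
      apply Subtype.ext
      refine Prod.ext ?_ ?_
      · exact ContinuousMap.congr_fun hg'p z
      · funext j
        exact ContinuousMap.congr_fun (hcoord j) z
    calc g' z = Lpc.mk (Lpc.down (g' z)) := (Lpc.mk_down _).symm
      _ = Lpc.mk (Lpc.down (G' z)) := congrArg Lpc.mk h1
      _ = G' z := Lpc.mk_down _

end Pullback

lemma aux {X : Type u} [TopologicalSpace X] [ConnectedSpace X] [LocallyPathConnectedSpace X]
    (x₀ : X) {ι : Type u} (H : ι → Subgroup (FundamentalGroup X x₀))
    (hH : ∀ j, IsGCSubgroup x₀ (H j)) : IsGCSubgroup x₀ (⨅ j, H j) := by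
  choose Xt iT xt pt hpt hconn hlpc hULt him using hH
  letI : ∀ j, TopologicalSpace (Xt j) := iT
  haveI := pathConnectedSpace_XP x₀ Xt xt pt hpt
  refine ⟨XP x₀ Xt xt pt hpt, inferInstance, xP x₀ Xt xt pt hpt, pP x₀ Xt xt pt hpt, rfl,
    inferInstance, (inferInstance : LocallyPathConnectedSpace _), hasUL_pP x₀ Xt xt pt hpt hULt, ?_⟩
  apply le_antisymm
  · exact le_iInf fun j => (him j) ▸ imageSubgroup_pP_le x₀ Xt xt pt hpt j
  · intro g hg
    obtain ⟨γ, rfl⟩ := loopClass_surjective g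
    have hmem : ∀ j, loopClass γ ∈ imageSubgroup (pt j) (xt j) x₀ (hpt j) := by
      intro j; rw [him j]; exact Subgroup.mem_iInf.mp hg j
    choose δ hδ using fun j => exists_loop_lift (pt j) (xt j) (hULt j) (hpt j) γ (hmem j)
    set Γ : Path (pbBase x₀ Xt xt pt hpt) (pbBase x₀ Xt xt pt hpt) :=
      ⟨⟨fun t => ⟨(γ t, fun j => δ j t), fun j => hδ j t⟩,
        (γ.continuous.prodMk (continuous_pi fun j => (δ j).continuous)).subtype_mk
          (fun t j => hδ j t)⟩,
        Subtype.ext (Prod.ext γ.source (funext fun j => (δ j).source)),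
        Subtype.ext (Prod.ext γ.target (funext fun j => (δ j).target))⟩ with hΓ
    set Γ' : Path (xP x₀ Xt xt pt hpt) (xP x₀ Xt xt pt hpt) :=
      ⟨⟨fun t => Lpc.mk ⟨Γ t, joined_of_path Γ t⟩,
        Lpc.continuous_mk_comp (Γ.continuous.subtype_mk (fun t => joined_of_path Γ t))⟩,
        congrArg Lpc.mk (Subtype.ext Γ.source), congrArg Lpc.mk (Subtype.ext Γ.target)⟩ with hΓ'
    refine (mem_imageSubgroup_iff _ _ _ _ _).mpr ⟨Γ', ?_⟩
    have h2 : loopClass (Γ'.map (pP x₀ Xt xt pt hpt).continuous) = loopClass γ :=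
      congrArg loopClass (by ext t; rfl)
    exact (π₁map_loopClass (pP x₀ Xt xt pt hpt) Γ').trans h2

end GCS4

set_option maxHeartbeats 1600000 in
/-- For `X` connected and locally path connected, the intersection of any
collection of generalized covering subgroups of `π₁(X,x₀)` is a generalized covering
subgroup. -/
theorem statement_4 {X : Type u} [TopologicalSpace X] [ConnectedSpace X]
    [LocallyPathConnectedSpace X] (x₀ : X) {ι : Type v}
    (H : ι → Subgroup (FundamentalGroup X x₀)) (hH : ∀ j, IsGCSubgroup x₀ (H j)) :
    IsGCSubgroup x₀ (⨅ j, H j) := by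
  have h1 : (⨅ j, H j) = ⨅ S : ↥(Set.range H), (S : Subgroup (FundamentalGroup X x₀)) := by
    apply le_antisymm
    · refine le_iInf fun S => ?_
      obtain ⟨j, hj⟩ := S.2
      exact hj ▸ iInf_le H j
    · exact le_iInf fun j => iInf_le _ (⟨H j, ⟨j, rfl⟩⟩ : ↥(Set.range H))
  have hH' : ∀ S : ↥(Set.range H), IsGCSubgroup x₀ (S : Subgroup (FundamentalGroup X x₀)) := by
    intro S
    obtain ⟨j, hj⟩ := S.2
    exact hj ▸ hH j
  have key := GCS4.aux (ι := ↥(Set.range H)) x₀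
    (fun S => (S : Subgroup (FundamentalGroup X x₀))) hH'
  rw [h1]
  exact key

end
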